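/- For every natural number n and every real x ≠ 0, the n-th derivative of sinc satisfies |sinc⁽ⁿ⁾(x)| ≤ (n + 1)/|x|. -/

import Mathlib

open Real hiding sinc
open intervalIntegral MeasureTheory

/-- The cardinal sine function: `sinc z = sin z / z` for `z ≠ 0`, `sinc 0 = 1`. -/
noncomputable def sinc (x : ℝ) : ℝ := if x = 0 then 1 else Real.sin x / x

noncomputable def sincInt (n : ℕ) (x : ℝ) : ℝ :=
  ∫ t in (0:ℝ)..1, t ^ n * Real.cos (x * t + n * (π / 2))

lemma sincInt_cont (n : ℕ) (x : ℝ) :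
    Continuous fun t : ℝ => t ^ n * Real.cos (x * t + n * (π / 2)) := by
  continuity

lemma sincInt_hasDerivAt (n : ℕ) (x : ℝ) :
    HasDerivAt (sincInt n) (sincInt (n + 1) x) x := by
  have key := intervalIntegral.hasDerivAt_integral_of_dominated_loc_of_deriv_le
    (F := fun x t => t ^ n * Real.cos (x * t + n * (π / 2)))
    (F' := fun x t => t ^ (n + 1) * Real.cos (x * t + (↑(n + 1)) * (π / 2)))
    (x₀ := x) (a := (0:ℝ)) (b := 1) (μ := volume) (bound := fun _ => 1)
    (s := Metric.ball x 1) (Metric.ball_mem_nhds x one_pos)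
    (Filter.Eventually.of_forall fun y => ((sincInt_cont n y).aestronglyMeasurable))
    ((sincInt_cont n x).intervalIntegrable 0 1)
    ((sincInt_cont (n + 1) x).aestronglyMeasurable)
    ?_ (intervalIntegrable_const) ?_
  · exact key.2
  · refine Filter.Eventually.of_forall fun t ht y _ => ?_
    rw [Set.uIoc_of_le (by norm_num : (0:ℝ) ≤ 1)] at ht
    have h1 : |t ^ (n+1)| ≤ 1 := by
      rw [abs_pow]
      exact pow_le_one₀ (abs_nonneg t) (abs_le.mpr ⟨by linarith [ht.1], ht.2⟩)
    calc ‖t ^ (n+1) * Real.cos (y * t + (↑(n+1)) * (π / 2))‖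
        ≤ |t ^ (n+1)| * 1 := by
          rw [Real.norm_eq_abs, abs_mul]
          exact mul_le_mul_of_nonneg_left (Real.abs_cos_le_one _) (abs_nonneg _)
      _ ≤ 1 := by simpa using h1
  · refine Filter.Eventually.of_forall fun t _ y _ => ?_
    have h : HasDerivAt (fun y : ℝ => y * t + n * (π / 2)) t y := by
      simpa using ((hasDerivAt_id y).mul_const t).add_const (n * (π / 2))
    have := ((Real.hasDerivAt_cos (y * t + n * (π / 2))).comp y h).const_mul (t ^ n)
    convert this using 1
    show t ^ (n+1) * Real.cos (y * t + (↑(n+1)) * (π / 2)) = _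
    have heq : ((n:ℝ) + 1) * (π / 2) = (n * (π / 2)) + π / 2 := by ring
    rw [pow_succ]
    push_cast
    rw [heq, ← add_assoc, Real.cos_add_pi_div_two]
    ring
    all_goals rfl

lemma sinc_eq_sincInt : sinc = sincInt 0 := by
  funext x
  unfold sincInt
  simp only [pow_zero, Nat.cast_zero, zero_mul, add_zero, one_mul]
  by_cases hx : x = 0
  · simp [sinc, hx]
  · rw [sinc, if_neg hx]
    have : ∫ t in (0:ℝ)..1, Real.cos (x * t) = x⁻¹ • ∫ u in (x*0)..(x*1), Real.cos u := by
      rw [intervalIntegral.integral_comp_mul_left _ hx]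
    rw [this]
    simp [div_eq_inv_mul]

lemma iteratedDeriv_sinc (n : ℕ) : iteratedDeriv n sinc = sincInt n := by
  induction n with
  | zero => simpa using sinc_eq_sincInt
  | succ n ih =>
    funext x
    rw [iteratedDeriv_succ, ih]
    exact (sincInt_hasDerivAt n x).deriv

lemma sincInt_abs_le_one (n : ℕ) (x : ℝ) : |sincInt n x| ≤ 1 := by
  have := intervalIntegral.norm_integral_le_of_norm_le_const
    (C := 1) (f := fun t : ℝ => t ^ n * Real.cos (x * t + n * (π / 2)))
    (a := 0) (b := 1) ?_
  · simpa [sincInt] using this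
  · intro t ht
    rw [Set.uIoc_of_le (by norm_num : (0:ℝ) ≤ 1)] at ht
    have h1 : |t ^ n| ≤ 1 := by
      rw [abs_pow]
      exact pow_le_one₀ (abs_nonneg t) (abs_le.mpr ⟨by linarith [ht.1], ht.2⟩)
    calc ‖t ^ n * Real.cos (x * t + n * (π / 2))‖
        ≤ |t ^ n| * 1 := by
          rw [Real.norm_eq_abs, abs_mul]
          exact mul_le_mul_of_nonneg_left (Real.abs_cos_le_one _) (abs_nonneg _)
      _ ≤ 1 := by simpa using h1

lemma sincInt_ibp (n : ℕ) (x : ℝ) :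
    x * sincInt (n + 1) x + (n + 1) * sincInt n x = Real.sin (x + (↑(n+1)) * (π / 2)) := by
  have hderiv : ∀ t ∈ Set.uIcc (0:ℝ) 1,
      HasDerivAt (fun t : ℝ => t ^ (n+1) * Real.sin (x * t + (↑(n+1)) * (π / 2)))
        ((n+1 : ℝ) * t ^ n * Real.sin (x * t + (↑(n+1)) * (π / 2))
          + t ^ (n+1) * (Real.cos (x * t + (↑(n+1)) * (π / 2)) * x)) t := by
    intro t _
    have h1 : HasDerivAt (fun t : ℝ => t ^ (n+1)) ((n+1 : ℝ) * t ^ n) t := by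
      simpa using hasDerivAt_pow (n+1) t
    have h2 : HasDerivAt (fun t : ℝ => x * t + (↑(n+1)) * (π / 2)) x t := by
      simpa using ((hasDerivAt_id t).const_mul x).add_const ((↑(n+1) : ℝ) * (π / 2))
    exact h1.mul ((Real.hasDerivAt_sin _).comp t h2)
  have hint : IntervalIntegrable (fun t : ℝ =>
      (n+1 : ℝ) * t ^ n * Real.sin (x * t + (↑(n+1)) * (π / 2))
        + t ^ (n+1) * (Real.cos (x * t + (↑(n+1)) * (π / 2)) * x)) volume 0 1 :=
    (Continuous.intervalIntegrable (by fun_prop) 0 1)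
  have ftc := intervalIntegral.integral_eq_sub_of_hasDerivAt hderiv hint
  simp only [one_pow, mul_one, zero_pow (Nat.succ_ne_zero n), zero_mul] at ftc
  rw [intervalIntegral.integral_add
      ((Continuous.intervalIntegrable (by fun_prop) 0 1))
      ((Continuous.intervalIntegrable (by fun_prop) 0 1))] at ftc
  have e1 : (∫ t in (0:ℝ)..1, (n+1 : ℝ) * t ^ n * Real.sin (x * t + (↑(n+1)) * (π / 2)))
      = (n + 1) * sincInt n x := by
    rw [sincInt, ← intervalIntegral.integral_const_mul]
    congr 1
    funext t
    have : ((n:ℝ) + 1) * (π / 2) = (n * (π / 2)) + π / 2 := by ring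
    push_cast
    rw [this, ← add_assoc, Real.sin_add_pi_div_two]
    ring
  have e2 : (∫ t in (0:ℝ)..1, t ^ (n+1) * (Real.cos (x * t + (↑(n+1)) * (π / 2)) * x))
      = x * sincInt (n+1) x := by
    rw [sincInt, ← intervalIntegral.integral_const_mul]
    congr 1
    funext t
    push_cast
    ring
  rw [e1, e2] at ftc
  push_cast at ftc ⊢
  linarith [ftc]

theorem stmt_10 (n : ℕ) (x : ℝ) (hx : x ≠ 0) :
    |iteratedDeriv n sinc x| ≤ (n + 1) / |x| := by
  have hax : (0:ℝ) < |x| := abs_pos.mpr hx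
  rw [iteratedDeriv_sinc]
  rw [le_div_iff₀ hax]
  cases n with
  | zero =>
    have h0 : sincInt 0 x = Real.sin x / x := by
      rw [← sinc_eq_sincInt, sinc, if_neg hx]
    rw [h0, abs_div, div_mul_cancel₀ _ (ne_of_gt hax)]
    have := Real.abs_sin_le_one x
    push_cast
    linarith
  | succ m =>
    have ibp := sincInt_ibp m x
    have h1 : |x * sincInt (m+1) x| ≤ 1 + (m + 1) := by
      have : x * sincInt (m+1) x
          = Real.sin (x + (↑(m+1)) * (π / 2)) - (m + 1) * sincInt m x := by
        linarith [ibp]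
      rw [this]
      calc |Real.sin (x + (↑(m+1)) * (π / 2)) - (m + 1) * sincInt m x|
          ≤ |Real.sin (x + (↑(m+1)) * (π / 2))| + |(m + 1 : ℝ) * sincInt m x| :=
            abs_sub _ _
        _ ≤ 1 + (m + 1) := by
            gcongr
            · exact Real.abs_sin_le_one _
            · rw [abs_mul, abs_of_nonneg (by positivity : (0:ℝ) ≤ (m:ℝ)+1)]
              calc ((m:ℝ)+1) * |sincInt m x| ≤ ((m:ℝ)+1) * 1 :=
                mul_le_mul_of_nonneg_left (sincInt_abs_le_one m x) (by positivity)
              _ = (m:ℝ) + 1 := mul_one _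
    rw [mul_comm, ← abs_mul]
    push_cast
    linarith [h1]
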